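/- Let R be a field, G a group, J a subgroup of G, λ a simple R[J]-module, and J¹ a finite subgroup of J whose order is invertible in R. Assume that the restriction λ|_{J¹} is a simple R[J¹]-module and that the intertwining set of λ|_{J¹} in G equals J, i.e. for g ∈ G one has Hom_{R[J¹ ∩ gJ¹g⁻¹]}(ᵍ(λ|_{J¹}), λ|_{J¹ ∩ gJ¹g⁻¹}) ≠ 0 if and only if g ∈ J. Then ind_J^G λ is a simple R[G]-module. -/

import Mathlib

open Function

variable {R : Type*} [Field R] {G : Type*} [Group G]
variable {V : Type*} [AddCommGroup V] [Module R V]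

/-- The induced module `ind_J^G λ`, modelled as the space of functions `f : G → V`
with `f (g * j) = σ j⁻¹ (f g)` supported on finitely many left cosets of `J`
(this is the usual model of `R[G] ⊗_{R[J]} V`, with `g ⊗ v` corresponding to the function
supported on `gJ` sending `g * j` to `σ j⁻¹ v`). -/
def indCarrier (J : Subgroup G) (σ : Representation R J V) : Submodule R (G → V) where
  carrier := {f | (∀ (g : G) (j : J), f (g * (j : G)) = σ j⁻¹ (f g)) ∧
      ((QuotientGroup.mk : G → G ⧸ J) '' Function.support f).Finite}
  add_mem' := by
    rintro f g ⟨hf1, hf2⟩ ⟨hg1, hg2⟩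
    refine ⟨fun x j => by simp [hf1, hg1], ?_⟩
    refine (hf2.union hg2).subset ?_
    rw [← Set.image_union]
    exact Set.image_mono (Function.support_add _ _)
  zero_mem' := ⟨fun g j => by simp, by simp⟩
  smul_mem' := by
    rintro c f ⟨hf1, hf2⟩
    refine ⟨fun g j => by simp [hf1], ?_⟩
    exact hf2.subset (Set.image_mono (Function.support_const_smul_subset c f))

/-- The representation of `G` on the induced module `ind_J^G λ`, by left translation:
`(x • f) (g) = f (x⁻¹ * g)`. -/
def indRep (J : Subgroup G) (σ : Representation R J V) :
    Representation R G (indCarrier J σ) where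
  toFun x :=
    { toFun := fun f => ⟨fun g => (f : G → V) (x⁻¹ * g), by
        refine ⟨fun g j => ?_, ?_⟩
        · show (f : G → V) (x⁻¹ * (g * (j : G))) = σ j⁻¹ ((f : G → V) (x⁻¹ * g))
          rw [← mul_assoc]
          exact f.2.1 _ j
        refine ((f.2.2).image (fun c : G ⧸ J => x • c)).subset ?_
        rintro c ⟨g, hg, rfl⟩
        refine ⟨QuotientGroup.mk (x⁻¹ * g), ⟨x⁻¹ * g, hg, rfl⟩, ?_⟩
        show x • (QuotientGroup.mk (x⁻¹ * g) : G ⧸ J) = QuotientGroup.mk g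
        rw [MulAction.Quotient.smul_mk, smul_eq_mul, mul_inv_cancel_left]⟩
      map_add' := fun f g => Subtype.ext (funext fun g' => rfl)
      map_smul' := fun c f => Subtype.ext (funext fun g' => rfl) }
  map_one' := by
    apply LinearMap.ext; intro f
    exact Subtype.ext (funext fun g => by simp)
  map_mul' := fun x y => by
    apply LinearMap.ext; intro f
    exact Subtype.ext (funext fun g => by simp [mul_assoc])


instance (J : Subgroup G) (σ : Representation R J V) :
    AddCommGroup (indRep J σ).asModule := inferInstanceAs (AddCommGroup (indCarrier J σ))

instance {H : Type*} [Group H] (σ : Representation R H V) :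
    AddCommGroup σ.asModule := inferInstanceAs (AddCommGroup V)

section MackeyAux

lemma mackey_equiv_apply {H : Type*} [Group H] (tau : Representation R H V)
    (x : tau.asModule) : tau.asModuleEquiv x = x := rfl

lemma mackey_smul_single {H : Type*} [Group H] (tau : Representation R H V) (h : H) (r : R)
    (x : tau.asModule) :
    (MonoidAlgebra.single h r : MonoidAlgebra R H) • x = r • tau h (tau.asModuleEquiv x) := by
  have := tau.asModuleEquiv_map_smul (MonoidAlgebra.single h r) x
  rw [Representation.asAlgebraHom_single] at this
  exact this

/-- An `R`-subspace invariant under a representation whose associated module is simple is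
trivial. -/
lemma mackey_invariant_bot_or_top {H : Type*} [Group H] (tau : Representation R H V)
    (hs : IsSimpleModule (MonoidAlgebra R H) tau.asModule)
    (p : Submodule R V) (hp : ∀ (h : H) (v : V), v ∈ p → tau h v ∈ p) :
    p = ⊥ ∨ p = ⊤ := by
  let q : Submodule (MonoidAlgebra R H) tau.asModule :=
    { carrier := (p : Set V)
      add_mem' := fun ha hb => p.add_mem ha hb
      zero_mem' := p.zero_mem
      smul_mem' := by
        intro a x hx
        induction a using MonoidAlgebra.induction_on with
        | of g =>
          have h1 : (MonoidAlgebra.of R H g) • x = (1 : R) • tau g (tau.asModuleEquiv x) :=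
            mackey_smul_single tau g 1 x
          show (MonoidAlgebra.of R H g) • x ∈ p
          rw [h1, one_smul, mackey_equiv_apply]
          exact hp g x hx
        | add f g hf hg =>
          show (f + g) • x ∈ p
          rw [add_smul]; exact p.add_mem hf hg
        | smul r f hf =>
          have h2 : (r • f) • x = r • (f • x) := by
            apply tau.asModuleEquiv.injective
            rw [tau.asModuleEquiv_map_smul, map_smul, LinearMap.smul_apply,
              ← tau.asModuleEquiv_map_smul]
            rfl
          show (r • f) • x ∈ p
          rw [h2]
          exact p.smul_mem r hf }
  rcases hs.toIsSimpleOrder.2 q with h | h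
  · left
    rw [Submodule.eq_bot_iff] at h ⊢
    exact fun x hx => h x hx
  · right
    rw [Submodule.eq_top_iff'] at h ⊢
    exact fun x => h x

open scoped Classical in
lemma mackey_restrict_coset_mem (J : Subgroup G) (sigma : Representation R J V)
    (f : G → V) (hf : f ∈ indCarrier J sigma) (c : G ⧸ J) :
    (fun g => if (QuotientGroup.mk g : G ⧸ J) = c then f g else 0) ∈ indCarrier J sigma := by
  constructor
  · intro g j
    have hq : (QuotientGroup.mk (g * (j : G)) : G ⧸ J) = QuotientGroup.mk g := by
      rw [QuotientGroup.eq]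
      simp
    by_cases h : (QuotientGroup.mk g : G ⧸ J) = c
    · simp only [hq, h, if_pos, hf.1 g j]
    · simp only [hq, h, if_neg, not_false_iff, map_zero]
  · refine hf.2.subset (Set.image_mono ?_)
    intro g hg
    simp only [Function.mem_support] at hg ⊢
    intro h
    apply hg
    simp [h]

end MackeyAux

/-- Criterion for irreducibility of an induced representation:
let `R` be a field, `G` a group, `J` a subgroup of `G`, `λ` a simple `R[J]`-module (given as
a representation `σ` of `J` on `V`), and `J¹` a finite subgroup of `J` whose order is
invertible in `R`.  Assume that the restriction `λ|_{J¹}` is a simple `R[J¹]`-module and that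
the intertwining set of `λ|_{J¹}` in `G` equals `J`: for `g ∈ G` there exists a nonzero
`R[J¹ ∩ gJ¹g⁻¹]`-linear map `ᵍ(λ|_{J¹}) → λ|_{J¹ ∩ gJ¹g⁻¹}` (where `x ∈ J¹ ∩ gJ¹g⁻¹` acts
on `ᵍ(λ|_{J¹})` by `σ (g⁻¹ x g)`) if and only if `g ∈ J`.
Then `ind_J^G λ` is a simple `R[G]`-module. -/
theorem stmt_3 (J : Subgroup G) (σ : Representation R J V)
    (hsimple : IsSimpleModule (MonoidAlgebra R J) σ.asModule)
    (J1 : Subgroup G) (hle : J1 ≤ J) [Finite J1] (hcard : (Nat.card J1 : R) ≠ 0)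
    (hres : IsSimpleModule (MonoidAlgebra R J1)
      (Representation.asModule (σ.comp (Subgroup.inclusion hle))))
    (hint : ∀ g : G,
      (∃ f : V →ₗ[R] V, f ≠ 0 ∧
        ∀ (x : G) (hx : x ∈ J1) (hx' : g⁻¹ * x * g ∈ J1) (v : V),
          f (σ ⟨g⁻¹ * x * g, hle hx'⟩ v) = σ ⟨x, hle hx⟩ (f v)) ↔ g ∈ J) :
    IsSimpleModule (MonoidAlgebra R G) (indRep J σ).asModule := by
  classical
  haveI : Fintype ↥J1 := Fintype.ofFinite ↥J1
  have happ : ∀ (x : G) (f : ↥(indCarrier J σ)) (g : G), (((indRep J σ) x f : ↥(indCarrier J σ)) : G → V) g = (f : G → V) (x⁻¹ * g) :=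
    fun _ _ _ => rfl
  have hval : ∀ (f : ↥(indCarrier J σ)) (g : G) (j : J), (f : G → V) (g * (j : G)) = σ j⁻¹ ((f : G → V) g) :=
    fun f => f.2.1
  haveI hVnt : Nontrivial V := IsSimpleModule.nontrivial (MonoidAlgebra R J) σ.asModule
  obtain ⟨v₀, hv₀⟩ := exists_ne (0 : V)
  -- a function supported on `J` with a prescribed value at `1`
  have hsec : ∀ v : V, ∃ f : ↥(indCarrier J σ),
      ((f : G → V) 1 = v) ∧ ∀ h : G, h ∉ J → (f : G → V) h = 0 := by
    intro v
    have hmem : (fun g => if hg : g ∈ J then σ (⟨g, hg⟩ : J)⁻¹ v else 0) ∈ indCarrier J σ := by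
      constructor
      · intro g j
        by_cases hg : g ∈ J
        · have hgj : g * (j : G) ∈ J := J.mul_mem hg j.2
          have hmul : (⟨g * (j : G), hgj⟩ : ↥J) = ⟨g, hg⟩ * j := rfl
          simp only [dif_pos hg, dif_pos hgj, hmul, mul_inv_rev, map_mul]
          rfl
        · have hgj : g * (j : G) ∉ J := by
            intro hgj
            exact hg (by simpa using J.mul_mem hgj (J.inv_mem j.2))
          simp only [dif_neg hg, dif_neg hgj, map_zero]
      · refine (Set.finite_singleton ((1 : G) : G ⧸ J)).subset ?_
        rintro c ⟨g, hg, rfl⟩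
        simp only [Function.mem_support] at hg
        by_cases hgJ : g ∈ J
        · have : (QuotientGroup.mk g : G ⧸ J) = QuotientGroup.mk 1 := by
            rw [QuotientGroup.eq]
            simpa using J.inv_mem hgJ
          simpa using this
        · exact absurd (dif_neg hgJ) hg
    refine ⟨⟨_, hmem⟩, ?_, ?_⟩
    · show (if hg : (1 : G) ∈ J then σ (⟨1, hg⟩ : J)⁻¹ v else 0) = v
      rw [dif_pos J.one_mem]
      have : (⟨(1 : G), J.one_mem⟩ : ↥J) = 1 := rfl
      rw [this, inv_one, map_one]
      rfl
    · intro h hh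
      exact dif_neg hh
  obtain ⟨fnz, hfnz1, _⟩ := hsec v₀
  haveI : Nontrivial (indRep J σ).asModule := by
    refine ⟨⟨fnz, 0, fun h => hv₀ ?_⟩⟩
    rw [← hfnz1, h]
    rfl
  refine { toIsSimpleOrder := ⟨fun W => or_iff_not_imp_left.mpr fun hWne => ?_⟩ }
  -- closure properties of W
  have hWρ : ∀ (g : G) (x : ↥(indCarrier J σ)), x ∈ W → (indRep J σ) g x ∈ W := by
    intro g x hx
    have h1 : (MonoidAlgebra.single g (1 : R) : MonoidAlgebra R G) • (show (indRep J σ).asModule from x) ∈ W :=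
      W.smul_mem (MonoidAlgebra.single g (1 : R)) hx
    rw [mackey_smul_single, one_smul, mackey_equiv_apply] at h1
    exact h1
  have hWr : ∀ (r : R) (x : ↥(indCarrier J σ)), x ∈ W → r • x ∈ W := by
    intro r x hx
    have h1 : (MonoidAlgebra.single (1 : G) r : MonoidAlgebra R G) • (show (indRep J σ).asModule from x) ∈ W :=
      W.smul_mem (MonoidAlgebra.single (1 : G) r) hx
    rw [mackey_smul_single, mackey_equiv_apply, map_one] at h1
    simp only [Module.End.one_apply] at h1
    exact h1
  -- a nonzero element of W with nonzero value at 1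
  obtain ⟨f₀, hf₀W, hf₀⟩ : ∃ f : ↥(indCarrier J σ), f ∈ W ∧ f ≠ 0 := by
    by_contra h
    push_neg at h
    apply hWne
    rw [Submodule.eq_bot_iff]
    exact fun x hx => h x hx
  obtain ⟨g₀, hg₀⟩ : ∃ g : G, (f₀ : G → V) g ≠ 0 := by
    by_contra h
    push_neg at h
    exact hf₀ (Subtype.ext (funext h))
  set f₁ : ↥(indCarrier J σ) := (indRep J σ) g₀⁻¹ f₀ with hf₁def
  have hf₁W : f₁ ∈ W := hWρ _ _ hf₀W
  have hf₁ : (f₁ : G → V) 1 ≠ 0 := by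
    rw [hf₁def, happ]
    simpa using hg₀
  -- the image of W under evaluation at 1 is all of V
  let U : Submodule R V :=
    { carrier := {v | ∃ f : ↥(indCarrier J σ), f ∈ W ∧ (f : G → V) 1 = v}
      add_mem' := by
        rintro a b ⟨f, hfW, rfl⟩ ⟨g, hgW, rfl⟩
        exact ⟨f + g, W.add_mem hfW hgW, rfl⟩
      zero_mem' := ⟨0, W.zero_mem, rfl⟩
      smul_mem' := by
        rintro r a ⟨f, hfW, rfl⟩
        exact ⟨r • f, hWr r f hfW, rfl⟩ }
  have hUJ : ∀ (j : ↥J) (v : V), v ∈ U → σ j v ∈ U := by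
    rintro j v ⟨f, hfW, rfl⟩
    refine ⟨(indRep J σ) (j : G) f, hWρ _ _ hfW, ?_⟩
    rw [happ]
    have h1 : ((j : G))⁻¹ * 1 = 1 * (((j⁻¹ : ↥J)) : G) := by simp
    rw [h1, hval f 1 j⁻¹, inv_inv]
  have hUtop : U = ⊤ := by
    rcases mackey_invariant_bot_or_top (σ.comp (Subgroup.inclusion hle)) hres U
        (fun x v hv => hUJ (Subgroup.inclusion hle x) v hv) with h | h
    · exfalso
      have hm : (f₁ : G → V) 1 ∈ U := ⟨f₁, hf₁W, rfl⟩
      rw [h] at hm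
      exact hf₁ (by simpa using hm)
    · exact h
  -- build an R-linear section of evaluation at 1 landing in W
  let Wr : Submodule R ↥(indCarrier J σ) :=
    { carrier := {f : ↥(indCarrier J σ) | f ∈ W}
      add_mem' := fun ha hb => W.add_mem ha hb
      zero_mem' := W.zero_mem
      smul_mem' := fun r f hf => hWr r f hf }
  let pW : ↥Wr →ₗ[R] V :=
    { toFun := fun f => ((f : ↥(indCarrier J σ)) : G → V) 1
      map_add' := fun a b => rfl
      map_smul' := fun r a => rfl }
  have hpWsur : Function.Surjective pW := by
    intro v
    have hv : v ∈ U := hUtop ▸ Submodule.mem_top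
    obtain ⟨f, hfW, hfv⟩ := hv
    exact ⟨⟨f, hfW⟩, hfv⟩
  obtain ⟨s₁, hs₁⟩ := pW.exists_rightInverse_of_surjective (LinearMap.range_eq_top.2 hpWsur)
  -- average the section over J1
  let jm : ↥J1 →* ↥J := Subgroup.inclusion hle
  let s : V →ₗ[R] ↥(indCarrier J σ) :=
    (Nat.card ↥J1 : R)⁻¹ • ∑ x : ↥J1, ((indRep J σ) (x : G)) ∘ₗ (Wr.subtype ∘ₗ s₁) ∘ₗ (σ ((jm x)⁻¹))
  have hsval : ∀ v, s v =
      (Nat.card ↥J1 : R)⁻¹ • ∑ x : ↥J1, (indRep J σ) (x : G) (Wr.subtype (s₁ (σ ((jm x)⁻¹) v))) := by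
    intro v
    simp only [s, LinearMap.smul_apply, LinearMap.sum_apply, LinearMap.comp_apply]
  have hsW : ∀ v, s v ∈ W := by
    intro v
    rw [hsval]
    exact hWr _ _ (Submodule.sum_mem W fun x _ => hWρ _ _ (s₁ (σ ((jm x)⁻¹) v)).2)
  have hs₁val : ∀ u : V, ((Wr.subtype (s₁ u) : ↥(indCarrier J σ)) : G → V) 1 = u := fun u =>
    DFunLike.congr_fun hs₁ u
  have hs1 : ∀ v, (s v : G → V) 1 = v := by
    intro v
    rw [hsval]
    have hcoe : ((∑ x : ↥J1, (indRep J σ) (x : G) (Wr.subtype (s₁ (σ ((jm x)⁻¹) v))) : ↥(indCarrier J σ)) : G → V)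
        = ∑ x : ↥J1, (((indRep J σ) (x : G) (Wr.subtype (s₁ (σ ((jm x)⁻¹) v))) : ↥(indCarrier J σ)) : G → V) := by
      exact AddSubmonoidClass.coe_finset_sum _ _
    rw [Submodule.coe_smul, Pi.smul_apply, hcoe, Finset.sum_apply]
    have hterm : ∀ x : ↥J1,
        (((indRep J σ) (x : G) (Wr.subtype (s₁ (σ ((jm x)⁻¹) v))) : ↥(indCarrier J σ)) : G → V) 1 = v := by
      intro x
      rw [happ]
      have h1 : ((x : G))⁻¹ * 1 = 1 * ((((jm x)⁻¹ : ↥J)) : G) := by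
        simp [jm, Subgroup.inclusion]
      rw [h1, hval, inv_inv, hs₁val]
      rw [← Module.End.mul_apply, ← map_mul, mul_inv_cancel, map_one, Module.End.one_apply]
    rw [Finset.sum_congr rfl fun x _ => hterm x, Finset.sum_const, Finset.card_univ]
    rw [← Nat.cast_smul_eq_nsmul R, smul_smul, ← Nat.card_eq_fintype_card,
      inv_mul_cancel₀ hcard, one_smul]
  have hsequiv : ∀ (y : ↥J1) (v : V), s (σ (jm y) v) = (indRep J σ) (y : G) (s v) := by
    intro y v
    rw [hsval, hsval, map_smul, map_sum]
    congr 1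
    refine Fintype.sum_equiv (Equiv.mulLeft y⁻¹) _ _ ?_
    intro z
    have h3 : σ ((jm z)⁻¹) (σ (jm y) v) = σ ((jm (y⁻¹ * z))⁻¹) v := by
      rw [← Module.End.mul_apply, ← map_mul]
      congr 2
      rw [show jm (y⁻¹ * z) = (jm y)⁻¹ * jm z by rw [map_mul, map_inv],
        mul_inv_rev, inv_inv]
    have h4 : ∀ u : ↥(indCarrier J σ),
        (indRep J σ) (y : G) ((indRep J σ) ((y⁻¹ * z : ↥J1) : G) u)
          = (indRep J σ) (z : G) u := by
      intro u
      apply Subtype.ext; funext g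
      rw [happ, happ, happ]
      rw [Subgroup.coe_mul, Subgroup.coe_inv]
      group
    show (indRep J σ) ((z : G)) (Wr.subtype (s₁ (σ ((jm z)⁻¹) (σ (jm y) v))))
        = (indRep J σ) (y : G)
            ((indRep J σ) ((y⁻¹ * z : ↥J1) : G) (Wr.subtype (s₁ (σ ((jm (y⁻¹ * z))⁻¹) v))))
    rw [h3]
    exact (h4 _).symm
  -- s v is supported on J
  have hsupp : ∀ (h : G), h ∉ J → ∀ v, (s v : G → V) h = 0 := by
    intro h hh
    by_contra hc
    push_neg at hc
    obtain ⟨v, hv⟩ := hc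
    have hmem : h⁻¹ ∈ J := by
      apply (hint h⁻¹).mp
      refine ⟨{ toFun := fun w => (s w : G → V) h
                map_add' := fun a b => by
                  show (s (a + b) : G → V) h = (s a : G → V) h + (s b : G → V) h
                  rw [map_add]; rfl
                map_smul' := fun r a => by
                  show (s (r • a) : G → V) h = r • (s a : G → V) h
                  rw [map_smul]; rfl }, ?_, ?_⟩
      · intro h0
        exact hv (by simpa using DFunLike.congr_fun h0 v)
      · intro x hx hx' w
        show (s (σ ⟨h⁻¹⁻¹ * x * h⁻¹, hle hx'⟩ w) : G → V) h
            = σ ⟨x, hle hx⟩ ((s w : G → V) h)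
        have hxy : (⟨h⁻¹⁻¹ * x * h⁻¹, hle hx'⟩ : ↥J) = jm ⟨h⁻¹⁻¹ * x * h⁻¹, hx'⟩ := rfl
        rw [hxy, hsequiv, happ]
        have harg : ((⟨h⁻¹⁻¹ * x * h⁻¹, hx'⟩ : ↥J1) : G)⁻¹ * h
            = h * (((⟨x, hle hx⟩⁻¹ : ↥J)) : G) := by
          show (h⁻¹⁻¹ * x * h⁻¹)⁻¹ * h = h * x⁻¹
          group
        rw [harg, hval, inv_inv]
    exact hh (by simpa using J.inv_mem hmem)
  -- the elements of W supported on J evaluate onto all of V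
  let WJ : Submodule R V :=
    { carrier := {v | ∃ f : ↥(indCarrier J σ), f ∈ W ∧ (∀ h : G, h ∉ J → (f : G → V) h = 0) ∧
        (f : G → V) 1 = v}
      add_mem' := by
        rintro a b ⟨f, hfW, hfs, rfl⟩ ⟨g, hgW, hgs, rfl⟩
        exact ⟨f + g, W.add_mem hfW hgW, fun h hh => by
          show (f : G → V) h + (g : G → V) h = 0
          rw [hfs h hh, hgs h hh, add_zero], rfl⟩
      zero_mem' := ⟨0, W.zero_mem, fun h _ => rfl, rfl⟩
      smul_mem' := by
        rintro r a ⟨f, hfW, hfs, rfl⟩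
        exact ⟨r • f, hWr r f hfW, fun h hh => by
          show r • (f : G → V) h = 0
          rw [hfs h hh, smul_zero], rfl⟩ }
  have hWJJ : ∀ (j : ↥J) (v : V), v ∈ WJ → σ j v ∈ WJ := by
    rintro j v ⟨f, hfW, hfs, rfl⟩
    refine ⟨(indRep J σ) (j : G) f, hWρ _ _ hfW, ?_, ?_⟩
    · intro h hh
      rw [happ]
      apply hfs
      intro hmem
      exact hh (by simpa using J.mul_mem j.2 hmem)
    · rw [happ]
      have h1 : ((j : G))⁻¹ * 1 = 1 * (((j⁻¹ : ↥J)) : G) := by simp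
      rw [h1, hval f 1 j⁻¹, inv_inv]
  have hWJtop : WJ = ⊤ := by
    rcases mackey_invariant_bot_or_top σ hsimple WJ hWJJ with h | h
    · exfalso
      have hm : (f₁ : G → V) 1 ∈ WJ :=
        ⟨s ((f₁ : G → V) 1), hsW _, fun h hh => hsupp h hh _, hs1 _⟩
      rw [h] at hm
      exact hf₁ (by simpa using hm)
    · exact h
  -- every element supported on J lies in W
  have hsuppJ : ∀ f : ↥(indCarrier J σ), (∀ h : G, h ∉ J → (f : G → V) h = 0) → f ∈ W := by
    intro f hf
    have hv : (f : G → V) 1 ∈ WJ := hWJtop ▸ Submodule.mem_top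
    obtain ⟨f', hf'W, hf'supp, hf'1⟩ := hv
    have heq : f = f' := by
      apply Subtype.ext
      funext g
      by_cases hg : g ∈ J
      · calc (f : G → V) g = (f : G → V) (1 * ((⟨g, hg⟩ : ↥J) : G)) := by rw [one_mul]
          _ = σ (⟨g, hg⟩ : ↥J)⁻¹ ((f : G → V) 1) := hval f 1 _
          _ = σ (⟨g, hg⟩ : ↥J)⁻¹ ((f' : G → V) 1) := by rw [hf'1]
          _ = (f' : G → V) (1 * ((⟨g, hg⟩ : ↥J) : G)) := (hval f' 1 _).symm
          _ = (f' : G → V) g := by rw [one_mul]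
      · rw [hf g hg, hf'supp g hg]
    rw [heq]
    exact hf'W
  -- every element supported on a single coset lies in W
  have hcoset : ∀ (c : G ⧸ J) (f : ↥(indCarrier J σ)),
      (∀ h : G, (QuotientGroup.mk h : G ⧸ J) ≠ c → (f : G → V) h = 0) → f ∈ W := by
    intro c f hf
    obtain ⟨g, rfl⟩ := QuotientGroup.mk_surjective c
    have h1 : (indRep J σ) g⁻¹ f ∈ W := by
      apply hsuppJ
      intro h hh
      rw [happ, inv_inv]
      apply hf
      intro hq
      apply hh
      rw [QuotientGroup.eq] at hq
      simpa using J.inv_mem (by simpa [mul_assoc] using hq)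
    have h2 : (indRep J σ) g ((indRep J σ) g⁻¹ f) = f := by
      rw [← Module.End.mul_apply, ← map_mul, mul_inv_cancel, map_one, Module.End.one_apply]
    have := hWρ g _ h1
    rwa [h2] at this
  -- conclude
  rw [Submodule.eq_top_iff']
  suffices hall : ∀ f : ↥(indCarrier J σ), f ∈ W by exact fun f => hall f
  intro f
  have hfin := f.2.2
  set S : Finset (G ⧸ J) := hfin.toFinset with hSdef
  have hdecomp : f = ∑ c ∈ S,
      (⟨fun g => if (QuotientGroup.mk g : G ⧸ J) = c then (f : G → V) g else 0,
        mackey_restrict_coset_mem J σ (f : G → V) f.2 c⟩ : ↥(indCarrier J σ)) := by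
    apply Subtype.ext
    rw [AddSubmonoidClass.coe_finset_sum]
    funext g
    rw [Finset.sum_apply]
    show (f : G → V) g = ∑ c ∈ S, (if (QuotientGroup.mk g : G ⧸ J) = c then (f : G → V) g else 0)
    rw [Finset.sum_ite_eq]
    by_cases hg : (QuotientGroup.mk g : G ⧸ J) ∈ S
    · rw [if_pos hg]
    · rw [if_neg hg]
      by_contra hne
      exact hg (hfin.mem_toFinset.mpr ⟨g, hne, rfl⟩)
  rw [hdecomp]
  refine Submodule.sum_mem W ?_
  intro c _
  apply hcoset c
  intro h hh
  show (if (QuotientGroup.mk h : G ⧸ J) = c then (f : G → V) h else 0) = 0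
  rw [if_neg hh]
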